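/- Let Y ⊂ P^N be a closed irreducible variety, A ⊂ (P^N)^∨ a projective curve of hyperplanes, and A° ⊂ A a nonempty open subset. Assume Y ⊄ H for every H ∈ A. Then Y equals the Zariski closure of the union of the intersections Y ∩ H over H ∈ A°. -/

import Mathlib

open MvPolynomial

noncomputable section

variable {σ : Type*}

/-- The common zero locus of a set of polynomials. -/
def zLocus (I : Set (MvPolynomial σ ℂ)) : Set (σ → ℂ) :=
  {x | ∀ f ∈ I, eval x f = 0}

/-- A set is algebraic if it is a common zero locus of polynomials. -/
def IsAlg (S : Set (σ → ℂ)) : Prop :=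
  ∃ I : Set (MvPolynomial σ ℂ), S = zLocus I

/-- Zariski closure. -/
def zcl (S : Set (σ → ℂ)) : Set (σ → ℂ) :=
  ⋂₀ {T | IsAlg T ∧ S ⊆ T}

/-- Irreducibility of a set with respect to algebraic subsets. -/
def IsIrredV (S : Set (σ → ℂ)) : Prop :=
  S.Nonempty ∧ ∀ T₁ T₂ : Set (σ → ℂ), IsAlg T₁ → IsAlg T₂ →
    S ⊆ T₁ ∪ T₂ → S ⊆ T₁ ∨ S ⊆ T₂

/-- Dimension of (the affine cone over) a variety, via chains of irreducible
algebraic subsets. For the cone over a projective variety this is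
(projective dimension) + 1. -/
def adim (S : Set (σ → ℂ)) : WithBot (WithTop ℕ) :=
  Order.krullDim {T : Set (σ → ℂ) // IsAlg T ∧ IsIrredV T ∧ T ⊆ S}

/-- `S` is (the affine cone over) a projective cone: there is a vertex `v`
such that the line through `v` and any point of `S` stays in `S`. -/
def IsConeV (S : Set (σ → ℂ)) : Prop :=
  ∃ v ∈ S, v ≠ 0 ∧ ∀ x ∈ S, ∀ a b : ℂ, a • v + b • x ∈ S

/-- Secant variety (of cones): closure of the union of lines through pairs of points. -/
def secantV (S : Set (σ → ℂ)) : Set (σ → ℂ) :=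
  zcl {v | ∃ x ∈ S, ∃ y ∈ S, ∃ a b : ℂ, v = a • x + b • y}

/-- The gradient of a polynomial at a point. -/
def gradP [Fintype σ] [DecidableEq σ] (P : MvPolynomial σ ℂ) (v : σ → ℂ) : σ → ℂ :=
  fun i => eval v (pderiv i P)

/-- The singular locus (cone) of the hypersurface defined by `P`. -/
def singLocus [Fintype σ] [DecidableEq σ] (P : MvPolynomial σ ℂ) : Set (σ → ℂ) :=
  {v | ∀ i, eval v (pderiv i P) = 0}

end

noncomputable section Aux

open MvPolynomial Set

variable {σ : Type*}

lemma mem_zLocus' {I : Set (MvPolynomial σ ℂ)} {x : σ → ℂ} :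
    x ∈ zLocus I ↔ ∀ f ∈ I, eval x f = 0 := Iff.rfl

lemma zLocus_span (I : Set (MvPolynomial σ ℂ)) :
    zLocus I = MvPolynomial.zeroLocus ℂ (Ideal.span I) := by
  ext x
  constructor
  · intro hx f hf
    induction hf using Submodule.span_induction with
    | mem g hg => exact hx g hg
    | zero => simp
    | add f g _ _ hf hg =>
      simp only [map_add, hf, hg, add_zero]
    | smul r f _ hf =>
      simp only [smul_eq_mul, map_mul, hf, mul_zero]
  · intro hx f hf
    exact hx f (Ideal.subset_span hf)

lemma isAlg_iff_exists_ideal {S : Set (σ → ℂ)} :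
    IsAlg S ↔ ∃ J : Ideal (MvPolynomial σ ℂ), S = MvPolynomial.zeroLocus ℂ J := by
  constructor
  · rintro ⟨I, rfl⟩; exact ⟨Ideal.span I, zLocus_span I⟩
  · rintro ⟨J, rfl⟩
    exact ⟨(J : Set _), by ext x; exact ⟨fun h f hf => h f hf, fun h f hf => h f hf⟩⟩

lemma isAlg_univ : IsAlg (Set.univ : Set (σ → ℂ)) :=
  ⟨∅, by ext x; simp [zLocus]⟩

lemma isAlg_empty : IsAlg (∅ : Set (σ → ℂ)) :=
  ⟨{1}, by ext x; simp [zLocus]⟩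

lemma isAlg_sInter {𝒯 : Set (Set (σ → ℂ))} (h : ∀ T ∈ 𝒯, IsAlg T) :
    IsAlg (⋂₀ 𝒯) := by
  choose I hI using h
  refine ⟨⋃ (T : Set (σ → ℂ)) (hT : T ∈ 𝒯), I T hT, ?_⟩
  ext x
  simp only [Set.mem_sInter, mem_zLocus', Set.mem_iUnion]
  constructor
  · rintro hx f ⟨T, hT, hf⟩
    have := hx T hT
    rw [hI T hT] at this
    exact this f hf
  · intro hx T hT
    rw [hI T hT]
    intro f hf
    exact hx f ⟨T, hT, hf⟩

lemma isAlg_iInter {ι : Sort*} {f : ι → Set (σ → ℂ)} (h : ∀ i, IsAlg (f i)) :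
    IsAlg (⋂ i, f i) := by
  rw [← Set.sInter_range]
  exact isAlg_sInter (by rintro T ⟨i, rfl⟩; exact h i)

lemma IsAlg.inter {S T : Set (σ → ℂ)} (hS : IsAlg S) (hT : IsAlg T) :
    IsAlg (S ∩ T) := by
  have := isAlg_sInter (𝒯 := {S, T}) (by rintro U (rfl | rfl) <;> assumption)
  simpa using this

lemma IsAlg.union {S T : Set (σ → ℂ)} (hS : IsAlg S) (hT : IsAlg T) :
    IsAlg (S ∪ T) := by
  obtain ⟨I, rfl⟩ := hS
  obtain ⟨J, rfl⟩ := hT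
  refine ⟨Set.image2 (· * ·) I J, ?_⟩
  ext x
  simp only [Set.mem_union, mem_zLocus', Set.mem_image2]
  constructor
  · rintro (hx | hx) f ⟨g, hg, g', hg', rfl⟩
    · simp [hx g hg]
    · simp [hx g' hg']
  · intro hx
    by_cases hI : ∀ f ∈ I, eval x f = 0
    · exact Or.inl hI
    · push_neg at hI
      obtain ⟨f, hf, hfx⟩ := hI
      refine Or.inr fun g hg => ?_
      have := hx (f * g) ⟨f, hf, g, hg, rfl⟩
      rw [map_mul] at this
      exact (mul_eq_zero.mp this).resolve_left hfx

lemma subset_zcl (S : Set (σ → ℂ)) : S ⊆ zcl S := by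
  intro x hx T hT
  exact hT.2 hx

lemma zcl_min {S T : Set (σ → ℂ)} (hT : IsAlg T) (h : S ⊆ T) : zcl S ⊆ T :=
  Set.sInter_subset_of_mem ⟨hT, h⟩

lemma isAlg_zcl (S : Set (σ → ℂ)) : IsAlg (zcl S) :=
  isAlg_sInter fun _ hT => hT.1

lemma IsAlg.zcl_eq {S : Set (σ → ℂ)} (hS : IsAlg S) : zcl S = S :=
  le_antisymm (zcl_min hS subset_rfl) (subset_zcl S)

lemma zeroLocus_vanishingIdeal_of_isAlg {S : Set (σ → ℂ)} (hS : IsAlg S) :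
    MvPolynomial.zeroLocus ℂ (vanishingIdeal ℂ S) = S := by
  obtain ⟨J, rfl⟩ := isAlg_iff_exists_ideal.mp hS
  refine le_antisymm ?_ (MvPolynomial.zeroLocus_vanishingIdeal_le _)
  exact MvPolynomial.zeroLocus_anti_mono (MvPolynomial.le_vanishingIdeal_zeroLocus J)

lemma vanishingIdeal_strict_anti {S T : Set (σ → ℂ)} (hS : IsAlg S) (hT : IsAlg T)
    (h : S ⊂ T) : vanishingIdeal ℂ T < vanishingIdeal ℂ S := by
  refine lt_of_le_of_ne (MvPolynomial.vanishingIdeal_anti_mono h.subset) fun he => ?_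
  have : S = T := by
    rw [← zeroLocus_vanishingIdeal_of_isAlg hS, ← zeroLocus_vanishingIdeal_of_isAlg hT, he]
  exact h.ne this

lemma mem_vanishingIdeal_iff' {S : Set (σ → ℂ)} {f : MvPolynomial σ ℂ} :
    f ∈ vanishingIdeal ℂ S ↔ ∀ x ∈ S, eval x f = 0 := Iff.rfl

lemma vanishingIdeal_isPrime {S : Set (σ → ℂ)} (hS : IsIrredV S) :
    (vanishingIdeal ℂ S).IsPrime := by
  constructor
  · intro htop
    obtain ⟨x, hx⟩ := hS.1
    have : (1 : MvPolynomial σ ℂ) ∈ vanishingIdeal ℂ S := htop ▸ Submodule.mem_top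
    simpa using this x hx
  · intro f g hfg
    have hcov : S ⊆ zLocus {f} ∪ zLocus {g} := by
      intro x hx
      have := hfg x hx
      rw [map_mul] at this
      rcases mul_eq_zero.mp this with h | h
      · exact Or.inl (by simpa [mem_zLocus'] using h)
      · exact Or.inr (by simpa [mem_zLocus'] using h)
    rcases hS.2 _ _ ⟨{f}, rfl⟩ ⟨{g}, rfl⟩ hcov with h | h
    · exact Or.inl fun x hx => h hx f rfl
    · exact Or.inr fun x hx => h hx g rfl

end Aux
noncomputable section Aux2

open MvPolynomial Set

variable {σ : Type*} [Fintype σ]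

lemma eval_smul_of_isHomogeneous {f : MvPolynomial σ ℂ} {n : ℕ} (hf : f.IsHomogeneous n)
    (c : ℂ) (v : σ → ℂ) : eval (c • v) f = c ^ n * eval v f := by
  rw [eval_eq', eval_eq', Finset.mul_sum]
  refine Finset.sum_congr rfl fun d hd => ?_
  have hdeg : d.degree = n := by
    by_contra h
    exact (mem_support_iff.mp hd) (hf.coeff_eq_zero h)
  have h1 : ∑ i, d i = n := by
    rw [← hdeg, Finsupp.degree]
    exact (Finset.sum_subset (Finset.subset_univ _)
      (fun i _ hi => Finsupp.notMem_support_iff.mp hi)).symm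
  have h2 : ∀ i, (c • v) i = c * v i := fun i => rfl
  calc coeff d f * ∏ i, (c • v) i ^ d i
      = coeff d f * ∏ i, (c ^ d i * v i ^ d i) := by
        refine congrArg _ (Finset.prod_congr rfl fun i _ => ?_)
        rw [h2, mul_pow]
    _ = coeff d f * ((∏ i, c ^ d i) * ∏ i, v i ^ d i) := by rw [Finset.prod_mul_distrib]
    _ = c ^ n * (coeff d f * ∏ i, v i ^ d i) := by
        rw [Finset.prod_pow_eq_pow_sum, h1]; ring

lemma homogeneousComponent_mem_vanishingIdeal {S : Set (σ → ℂ)}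
    (hcone : ∀ c : ℂ, ∀ v ∈ S, c • v ∈ S) {f : MvPolynomial σ ℂ}
    (hf : f ∈ vanishingIdeal ℂ S) (j : ℕ) : homogeneousComponent j f ∈ vanishingIdeal ℂ S := by
  intro v hv
  by_cases hj : j ≤ f.totalDegree
  swap
  · rw [homogeneousComponent_eq_zero _ _ (lt_of_not_ge hj)]
    simp
  · set Q : Polynomial ℂ := ∑ i ∈ Finset.range (f.totalDegree + 1),
      Polynomial.C (eval v (homogeneousComponent i f)) * Polynomial.X ^ i with hQ
    have hQeval : ∀ c : ℂ, Q.eval c = 0 := by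
      intro c
      have h1 : Polynomial.eval c Q
          = ∑ i ∈ Finset.range (f.totalDegree + 1),
            eval v (homogeneousComponent i f) * c ^ i := by
        rw [hQ, Polynomial.eval_finset_sum]
        simp
      have h2 : eval (c • v) f = ∑ i ∈ Finset.range (f.totalDegree + 1),
          eval v (homogeneousComponent i f) * c ^ i := by
        conv_lhs => rw [← sum_homogeneousComponent f]
        rw [map_sum]
        refine Finset.sum_congr rfl fun i _ => ?_
        rw [eval_smul_of_isHomogeneous (homogeneousComponent_isHomogeneous i f) c v, mul_comm]
      rw [h1, ← h2]
      exact hf _ (hcone c v hv)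
    have hQ0 : Q = 0 := by
      refine Polynomial.eq_zero_of_infinite_isRoot _ ?_
      have : {x : ℂ | Q.IsRoot x} = Set.univ := Set.eq_univ_of_forall fun c => hQeval c
      rw [this]
      exact Set.infinite_univ
    have hc : Q.coeff j = 0 := by rw [hQ0]; simp
    rw [hQ, Polynomial.finset_sum_coeff] at hc
    simp only [Polynomial.coeff_C_mul, Polynomial.coeff_X_pow, mul_ite, mul_one, mul_zero] at hc
    rwa [Finset.sum_ite_eq (Finset.range (f.totalDegree + 1)) j
      (fun i => eval v (homogeneousComponent i f)), if_pos (Finset.mem_range.mpr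
      (Nat.lt_succ_of_le hj))] at hc

/-- The polynomial obtained by restricting `f` to the line `c ↦ c • v`. -/
def linePoly (v : σ → ℂ) (f : MvPolynomial σ ℂ) : Polynomial ℂ :=
  MvPolynomial.eval₂ Polynomial.C (fun i => Polynomial.C (v i) * Polynomial.X) f

lemma linePoly_eval (v : σ → ℂ) (f : MvPolynomial σ ℂ) (c : ℂ) :
    (linePoly v f).eval c = eval (c • v) f := by
  have h0 : (linePoly v f).eval c = (Polynomial.evalRingHom c) (linePoly v f) := rfl
  rw [h0, linePoly, MvPolynomial.eval₂_comp_left (Polynomial.evalRingHom c)]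
  have h2 : (Polynomial.evalRingHom c).comp Polynomial.C = RingHom.id ℂ := by
    ext r; simp
  have h3 : ((Polynomial.evalRingHom c) ∘ fun i => Polynomial.C (v i) * Polynomial.X)
      = fun i => (c • v) i := by
    funext i
    show Polynomial.eval c (Polynomial.C (v i) * Polynomial.X) = (c • v) i
    have h4 : (c • v) i = c * v i := rfl
    rw [h4, Polynomial.eval_mul, Polynomial.eval_C, Polynomial.eval_X, mul_comm]
  rw [h2, h3]
  exact MvPolynomial.eval₂_id _

lemma line_subset_or_finite {v : σ → ℂ} {T : Set (σ → ℂ)} (hT : IsAlg T) :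
    (Set.range (fun c : ℂ => c • v) ⊆ T) ∨ {c : ℂ | c • v ∈ T}.Finite := by
  obtain ⟨I, rfl⟩ := hT
  by_cases h : ∀ f ∈ I, linePoly v f = 0
  · left
    rintro x ⟨c, rfl⟩ f hf
    rw [← linePoly_eval, h f hf]
    simp
  · right
    push_neg at h
    obtain ⟨f, hf, hf0⟩ := h
    refine (Polynomial.finite_setOf_isRoot hf0).subset fun c hc => ?_
    have : eval (c • v) f = 0 := hc f hf
    show (linePoly v f).eval c = 0
    rwa [linePoly_eval]

end Aux2
noncomputable section Aux3

set_option linter.unusedSectionVars false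

open MvPolynomial Set

variable {σ : Type*} [Fintype σ]

lemma smul_line_injective {v : σ → ℂ} (hv : v ≠ 0) :
    Function.Injective (fun c : ℂ => c • v) := by
  obtain ⟨k, hk⟩ : ∃ k, v k ≠ 0 := by
    by_contra h; push_neg at h; exact hv (funext h)
  intro a b hab
  have h2 : a * v k = b * v k := congrFun hab k
  exact mul_right_cancel₀ hk h2

lemma line_infinite {v : σ → ℂ} (hv : v ≠ 0) :
    (Set.range (fun c : ℂ => c • v)).Infinite :=
  Set.infinite_range_of_injective (smul_line_injective hv)

lemma line_subset_of_infinite {v : σ → ℂ} {T : Set (σ → ℂ)} (hT : IsAlg T)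
    (h : {c : ℂ | c • v ∈ T}.Infinite) : Set.range (fun c : ℂ => c • v) ⊆ T := by
  rcases line_subset_or_finite (v := v) hT with h' | h'
  · exact h'
  · exact absurd h' h

lemma line_subset_of_ne_zero_subset {v : σ → ℂ} (hv : v ≠ 0) {T : Set (σ → ℂ)}
    (hT : IsAlg T) (h : Set.range (fun c : ℂ => c • v) \ {0} ⊆ T) :
    Set.range (fun c : ℂ => c • v) ⊆ T := by
  refine line_subset_of_infinite hT (Set.Infinite.mono ?_ (Set.infinite_of_finite_compl
    (by simp : ({0}ᶜ : Set ℂ)ᶜ.Finite)))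
  intro c hc
  have hc0 : c ≠ 0 := hc
  refine h ⟨⟨c, rfl⟩, ?_⟩
  simp only [Set.mem_singleton_iff]
  intro h0
  exact hc0 (by simpa [hv] using (smul_eq_zero.mp h0))

lemma isAlg_line (v : σ → ℂ) : IsAlg (Set.range (fun c : ℂ => c • v)) := by
  classical
  by_cases hv : v = 0
  · subst hv
    have : Set.range (fun c : ℂ => c • (0 : σ → ℂ)) = {0} := by
      ext x; simp [eq_comm]
    rw [this]
    refine ⟨{g | ∃ i : σ, g = X i}, ?_⟩
    ext w
    simp only [Set.mem_singleton_iff, mem_zLocus', Set.mem_setOf_eq]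
    constructor
    · rintro rfl f ⟨i, rfl⟩
      simp
    · intro h
      funext i
      have := h (X i) ⟨i, rfl⟩
      simpa using this
  obtain ⟨k, hk⟩ : ∃ k, v k ≠ 0 := by
    by_contra h; push_neg at h; exact hv (funext h)
  refine ⟨{g | ∃ i j : σ, g = C (v j) * X i - C (v i) * X j}, ?_⟩
  ext w
  simp only [Set.mem_range, mem_zLocus', Set.mem_setOf_eq]
  constructor
  · rintro ⟨c, rfl⟩ f ⟨i, j, rfl⟩
    have hi : (c • v) i = c * v i := rfl
    have hj : (c • v) j = c * v j := rfl
    simp only [map_sub, map_mul, eval_C, eval_X, hi, hj]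
    ring
  · intro hw
    refine ⟨w k / v k, funext fun i => ?_⟩
    have h1 : v k * w i - v i * w k = 0 := by
      have := hw _ ⟨i, k, rfl⟩
      simpa using this
    show w k / v k * v i = w i
    field_simp
    linear_combination -h1

lemma isIrredV_line {v : σ → ℂ} (hv : v ≠ 0) :
    IsIrredV (Set.range (fun c : ℂ => c • v)) := by
  refine ⟨⟨v, 1, one_smul _ _⟩, fun T₁ T₂ h₁ h₂ hsub => ?_⟩
  by_contra hcon
  push_neg at hcon
  rcases line_subset_or_finite (v := v) h₁ with hc1 | hc1
  · exact hcon.1 hc1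
  rcases line_subset_or_finite (v := v) h₂ with hc2 | hc2
  · exact hcon.2 hc2
  have : (Set.univ : Set ℂ) ⊆ {c : ℂ | c • v ∈ T₁} ∪ {c : ℂ | c • v ∈ T₂} := by
    intro c _
    rcases hsub ⟨c, rfl⟩ with h | h
    · exact Or.inl h
    · exact Or.inr h
  exact Set.infinite_univ ((hc1.union hc2).subset this)

lemma isAlg_singleton (a : σ → ℂ) : IsAlg ({a} : Set (σ → ℂ)) := by
  refine ⟨{g | ∃ i : σ, g = X i - C (a i)}, ?_⟩
  ext w
  simp only [Set.mem_singleton_iff, mem_zLocus', Set.mem_setOf_eq]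
  constructor
  · rintro rfl f ⟨i, rfl⟩
    simp
  · intro h
    funext i
    have := h _ ⟨i, rfl⟩
    simp only [map_sub, eval_X, eval_C] at this
    exact sub_eq_zero.mp this

lemma isAlg_of_finite {S : Set (σ → ℂ)} (hS : S.Finite) : IsAlg S := by
  refine Set.Finite.induction_on S hS ?_ ?_
  · exact isAlg_empty
  · intro a s _ _ hs
    have : insert a s = {a} ∪ s := rfl
    rw [this]
    exact (isAlg_singleton a).union hs

lemma isIrredV_singleton (a : σ → ℂ) : IsIrredV ({a} : Set (σ → ℂ)) := by
  refine ⟨⟨a, rfl⟩, fun T₁ T₂ _ _ hsub => ?_⟩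
  rcases hsub rfl with h | h
  · exact Or.inl (by rintro x rfl; exact h)
  · exact Or.inr (by rintro x rfl; exact h)

lemma eq_singleton_of_finite_irred {S : Set (σ → ℂ)} (hfin : S.Finite)
    (hirr : IsIrredV S) : ∃ p, S = {p} := by
  obtain ⟨p, hp⟩ := hirr.1
  refine ⟨p, ?_⟩
  by_contra hne
  have : ∃ q ∈ S, q ≠ p := by
    by_contra h
    push_neg at h
    exact hne (Set.eq_singleton_iff_unique_mem.mpr ⟨hp, h⟩)
  obtain ⟨q, hq, hqp⟩ := this
  have hcov : S ⊆ {p} ∪ (S \ {p}) := by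
    intro x hx
    by_cases h : x = p
    · exact Or.inl h
    · exact Or.inr ⟨hx, h⟩
  rcases hirr.2 _ _ (isAlg_singleton p) (isAlg_of_finite hfin.diff) hcov with h | h
  · exact hqp (h hq)
  · exact (h hp).2 rfl

lemma irred_subset_line {v : σ → ℂ} (hv : v ≠ 0) {S : Set (σ → ℂ)}
    (hSalg : IsAlg S) (hSirr : IsIrredV S)
    (hsub : S ⊆ Set.range (fun c : ℂ => c • v)) :
    (∃ p, S = {p}) ∨ S = Set.range (fun c : ℂ => c • v) := by
  by_cases hfin : {c : ℂ | c • v ∈ S}.Finite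
  · left
    refine eq_singleton_of_finite_irred ?_ hSirr
    have : S ⊆ (fun c : ℂ => c • v) '' {c : ℂ | c • v ∈ S} := by
      intro x hx
      obtain ⟨c, rfl⟩ := hsub hx
      exact ⟨c, hx, rfl⟩
    exact (hfin.image _).subset this
  · right
    exact le_antisymm hsub (line_subset_of_infinite hSalg hfin)

lemma isAlg_sUnion_finite {𝒯 : Set (Set (σ → ℂ))} (hfin : 𝒯.Finite)
    (h : ∀ T ∈ 𝒯, IsAlg T) : IsAlg (⋃₀ 𝒯) := by
  revert h
  refine Set.Finite.induction_on 𝒯 hfin (fun _ => ?_) ?_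
  · simpa using isAlg_empty
  · intro T 𝒯' _ _ ih h
    rw [Set.sUnion_insert]
    exact (h T (Set.mem_insert _ _)).union (ih fun U hU => h U (Set.mem_insert_of_mem _ hU))

lemma irred_subset_of_subset_sUnion {S : Set (σ → ℂ)} (hS : IsIrredV S)
    {𝒯 : Set (Set (σ → ℂ))} (hfin : 𝒯.Finite) (halg : ∀ T ∈ 𝒯, IsAlg T)
    (hsub : S ⊆ ⋃₀ 𝒯) : ∃ T ∈ 𝒯, S ⊆ T := by
  revert halg hsub
  refine Set.Finite.induction_on 𝒯 hfin (fun _ hsub => ?_) ?_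
  · obtain ⟨x, hx⟩ := hS.1
    exact absurd (hsub hx) (by simp)
  · intro T 𝒯' _ hfin' ih halg hsub
    rw [Set.sUnion_insert] at hsub
    rcases hS.2 _ _ (halg T (Set.mem_insert _ _))
      (isAlg_sUnion_finite hfin' fun U hU => halg U (Set.mem_insert_of_mem _ hU))
      hsub with h | h
    · exact ⟨T, Set.mem_insert _ _, h⟩
    · obtain ⟨U, hU, hSU⟩ := ih (fun U hU => halg U (Set.mem_insert_of_mem _ hU)) h
      exact ⟨U, Set.mem_insert_of_mem _ hU, hSU⟩

end Aux3
noncomputable section Aux4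

set_option linter.unusedSectionVars false

open MvPolynomial Set

variable {σ : Type*} [Fintype σ]

lemma exists_irred_decomposition (S : Set (σ → ℂ)) (hS : IsAlg S) :
    ∃ 𝒯 : Set (Set (σ → ℂ)), 𝒯.Finite ∧ (∀ T ∈ 𝒯, IsAlg T ∧ IsIrredV T) ∧ S = ⋃₀ 𝒯 := by
  have hgt : WellFounded ((· > ·) : Ideal (MvPolynomial σ ℂ) → Ideal (MvPolynomial σ ℂ) → Prop) :=
    (inferInstance : WellFoundedGT (Ideal (MvPolynomial σ ℂ))).wf
  have hwf : WellFounded (InvImage (· > ·) (fun S : Set (σ → ℂ) => vanishingIdeal ℂ S)) :=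
    InvImage.wf _ hgt
  revert hS
  refine hwf.induction (C := fun S => IsAlg S →
    ∃ 𝒯 : Set (Set (σ → ℂ)), 𝒯.Finite ∧ (∀ T ∈ 𝒯, IsAlg T ∧ IsIrredV T) ∧ S = ⋃₀ 𝒯) S ?_
  clear S
  intro S ih hS
  by_cases hemp : S = ∅
  · exact ⟨∅, Set.finite_empty, by simp, by simp [hemp]⟩
  by_cases hirr : IsIrredV S
  · refine ⟨{S}, Set.finite_singleton _, ?_, by simp⟩
    rintro T hT
    rw [Set.mem_singleton_iff] at hT
    subst hT
    exact ⟨hS, hirr⟩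
  · have hne : S.Nonempty := Set.nonempty_iff_ne_empty.mpr hemp
    rw [IsIrredV] at hirr
    push_neg at hirr
    obtain ⟨T₁, T₂, h₁, h₂, hsub, hn₁, hn₂⟩ := hirr hne
    have e₁ : S ∩ T₁ ⊂ S :=
      ⟨Set.inter_subset_left, fun hc => hn₁ fun x hx => (hc hx).2⟩
    have e₂ : S ∩ T₂ ⊂ S :=
      ⟨Set.inter_subset_left, fun hc => hn₂ fun x hx => (hc hx).2⟩
    have r₁ : InvImage (· > ·) (fun S : Set (σ → ℂ) => vanishingIdeal ℂ S) (S ∩ T₁) S :=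
      vanishingIdeal_strict_anti (hS.inter h₁) hS e₁
    have r₂ : InvImage (· > ·) (fun S : Set (σ → ℂ) => vanishingIdeal ℂ S) (S ∩ T₂) S :=
      vanishingIdeal_strict_anti (hS.inter h₂) hS e₂
    obtain ⟨𝒯₁, hf₁, hi₁, he₁⟩ := ih _ r₁ (hS.inter h₁)
    obtain ⟨𝒯₂, hf₂, hi₂, he₂⟩ := ih _ r₂ (hS.inter h₂)
    refine ⟨𝒯₁ ∪ 𝒯₂, hf₁.union hf₂, ?_, ?_⟩
    · rintro T (h | h)
      · exact hi₁ T h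
      · exact hi₂ T h
    · rw [Set.sUnion_union, ← he₁, ← he₂, ← Set.inter_union_distrib_left,
        Set.inter_eq_left.mpr hsub]

end Aux4
noncomputable section Aux5

set_option linter.unusedSectionVars false

open MvPolynomial Set Module

variable {σ : Type*} [Fintype σ]

lemma homogeneousSubmodule_fd (d : ℕ) :
    FiniteDimensional ℂ (homogeneousSubmodule σ ℂ d) := by
  refine Submodule.finiteDimensional_of_le (S₂ := restrictTotalDegree σ ℂ d) ?_
  intro f hf
  rw [mem_restrictTotalDegree]
  exact ((mem_homogeneousSubmodule _ _).mp hf).totalDegree_le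

lemma homogeneousComponent_mul_linear {ℓ b : MvPolynomial σ ℂ} (hl : ℓ.IsHomogeneous 1)
    {d : ℕ} (hd : 1 ≤ d) :
    homogeneousComponent d (b * ℓ) = homogeneousComponent (d - 1) b * ℓ := by
  conv_lhs => rw [← sum_homogeneousComponent b, Finset.sum_mul, map_sum]
  have h1 : ∀ j, homogeneousComponent d (homogeneousComponent j b * ℓ)
      = if j = d - 1 then homogeneousComponent j b * ℓ else 0 := by
    intro j
    have hm : homogeneousComponent j b * ℓ ∈ homogeneousSubmodule σ ℂ (j + 1) :=
      (mem_homogeneousSubmodule _ _).mpr ((homogeneousComponent_isHomogeneous j b).mul hl)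
    rw [homogeneousComponent_of_mem hm]
    have hiff : (d = j + 1) ↔ (j = d - 1) := by omega
    rw [if_congr hiff rfl rfl]
  rw [Finset.sum_congr rfl fun j _ => h1 j,
    Finset.sum_ite_eq' (Finset.range (b.totalDegree + 1)) (d - 1)
      (fun j => homogeneousComponent j b * ℓ)]
  by_cases hmem : d - 1 ∈ Finset.range (b.totalDegree + 1)
  · rw [if_pos hmem]
  · rw [if_neg hmem, homogeneousComponent_eq_zero, zero_mul]
    simp only [Finset.mem_range] at hmem
    omega

lemma prod_X_pow_mem (t : Finset σ) (s : σ → ℕ) :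
    (∏ i ∈ t, X i ^ s i : MvPolynomial σ ℂ)
      ∈ (Ideal.span (Set.range (X : σ → MvPolynomial σ ℂ))) ^ (∑ i ∈ t, s i) := by
  classical
  induction t using Finset.induction_on with
  | empty => simp [Ideal.one_eq_top]
  | @insert a t ha ih =>
    rw [Finset.prod_insert ha, Finset.sum_insert ha, pow_add]
    exact Ideal.mul_mem_mul (Ideal.pow_mem_pow (Ideal.subset_span (Set.mem_range_self a)) _) ih

lemma monomial_mem_pow (s : σ →₀ ℕ) (a : ℂ) :
    (monomial s a : MvPolynomial σ ℂ)
      ∈ (Ideal.span (Set.range (X : σ → MvPolynomial σ ℂ))) ^ s.degree := by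
  rw [monomial_eq]
  refine Ideal.mul_mem_left _ _ ?_
  have h1 : (s.prod fun i e => (X i : MvPolynomial σ ℂ) ^ e)
      = ∏ i ∈ s.support, X i ^ s i := rfl
  rw [h1, Finsupp.degree]
  exact prod_X_pow_mem s.support s

lemma homog_mem_pow {f : MvPolynomial σ ℂ} {d : ℕ} (hf : f.IsHomogeneous d) :
    f ∈ (Ideal.span (Set.range (X : σ → MvPolynomial σ ℂ))) ^ d := by
  nth_rewrite 1 [f.as_sum]
  refine Ideal.sum_mem _ fun v hv => ?_
  have hdeg : v.degree = d := by
    by_contra h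
    exact (mem_support_iff.mp hv) (hf.coeff_eq_zero h)
  rw [← hdeg]
  exact monomial_mem_pow v (coeff v f)

theorem cone_hyperplane_zero (A : Set (σ → ℂ)) (hA : IsAlg A) (hAirr : IsIrredV A)
    (hAcone : ∀ c : ℂ, ∀ w ∈ A, c • w ∈ A)
    (ℓ : MvPolynomial σ ℂ) (hl : ℓ.IsHomogeneous 1)
    (hline : ∃ v, v ≠ 0 ∧ v ∈ A ∧ Set.range (fun c : ℂ => c • v) ⊂ A) :
    ∃ φ ∈ A, φ ≠ 0 ∧ eval φ ℓ = 0 := by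
  classical
  by_contra hcon
  push_neg at hcon
  obtain ⟨v, hv0, hvA, hlineA⟩ := hline
  set L : Set (σ → ℂ) := Set.range (fun c : ℂ => c • v) with hL
  set p : Ideal (MvPolynomial σ ℂ) := vanishingIdeal ℂ A with hp
  set q : Ideal (MvPolynomial σ ℂ) := vanishingIdeal ℂ L with hq
  have hApdeq : MvPolynomial.zeroLocus ℂ p = A := zeroLocus_vanishingIdeal_of_isAlg hA
  have hpprime : p.IsPrime := vanishingIdeal_isPrime hAirr
  have hqprime : q.IsPrime := vanishingIdeal_isPrime (isIrredV_line hv0)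
  have hpq : p < q := vanishingIdeal_strict_anti (isAlg_line v) hA hlineA
  have hLcone : ∀ c : ℂ, ∀ w ∈ L, c • w ∈ L := by
    rintro c w ⟨c', rfl⟩
    exact ⟨c * c', (smul_smul c c' v).symm⟩
  have hpcomp : ∀ f ∈ p, ∀ j, homogeneousComponent j f ∈ p :=
    fun f hf j => homogeneousComponent_mem_vanishingIdeal hAcone hf j
  have hqcomp : ∀ f ∈ q, ∀ j, homogeneousComponent j f ∈ q :=
    fun f hf j => homogeneousComponent_mem_vanishingIdeal hLcone hf j
  -- a homogeneous element of q not in p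
  obtain ⟨g, hgq, hgp⟩ := SetLike.exists_of_lt hpq
  have hex : ∃ e, homogeneousComponent e g ∉ p := by
    by_contra h
    push_neg at h
    refine hgp ?_
    have hsum : g = ∑ i ∈ Finset.range (g.totalDegree + 1), homogeneousComponent i g :=
      (sum_homogeneousComponent g).symm
    rw [hsum]
    exact Submodule.sum_mem _ fun i _ => h i
  obtain ⟨e, hf₀p⟩ := hex
  set f₀ : MvPolynomial σ ℂ := homogeneousComponent e g with hf₀
  have hf₀q : f₀ ∈ q := hqcomp g hgq e
  have hf₀hom : f₀.IsHomogeneous e := homogeneousComponent_isHomogeneous e g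
  have h0L : (0 : σ → ℂ) ∈ L := ⟨0, zero_smul _ _⟩
  have he1 : 1 ≤ e := by
    rcases Nat.eq_zero_or_pos e with he | he
    · exfalso
      have hC : f₀ = C (coeff 0 g) := by rw [hf₀, he, homogeneousComponent_zero]
      have h3 : eval 0 f₀ = 0 := hf₀q 0 h0L
      rw [hC, eval_C] at h3
      have h4 : f₀ = 0 := by rw [hC, h3, map_zero]
      exact hf₀p (h4 ▸ p.zero_mem)
    · exact he
  obtain ⟨i₀, hi₀⟩ : ∃ k, v k ≠ 0 := by
    by_contra h; push_neg at h; exact hv0 (funext h)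
  have hvL : v ∈ L := ⟨1, one_smul _ _⟩
  have hXq : X i₀ ∉ q := by
    intro h
    have h5 : eval v (X i₀) = 0 := h v hvL
    rw [eval_X] at h5
    exact hi₀ h5
  -- the irrelevant ideal is contained in the radical of p + (ℓ)
  set m₀ : Ideal (MvPolynomial σ ℂ) := Ideal.span (Set.range (X : σ → MvPolynomial σ ℂ))
    with hm₀
  set J : Ideal (MvPolynomial σ ℂ) := p ⊔ Ideal.span {ℓ} with hJ
  have hJrad : m₀ ≤ J.radical := by
    rw [← MvPolynomial.vanishingIdeal_zeroLocus_eq_radical (K := ℂ) J]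
    refine Ideal.span_le.mpr ?_
    rintro g' ⟨i, rfl⟩
    intro x hx
    have hxA : x ∈ A := by
      rw [← hApdeq]
      intro f hf
      exact hx f (Ideal.mem_sup_left hf)
    have hxl : eval x ℓ = 0 := hx ℓ (Ideal.mem_sup_right (Ideal.subset_span rfl))
    have hx0 : x = 0 := by
      by_contra hx0
      exact hcon x hxA hx0 hxl
    rw [hx0, aeval_X]
    rfl
  obtain ⟨D₀, hD₀⟩ := Ideal.exists_pow_le_of_le_radical_of_fg hJrad
    (Submodule.fg_span (Set.finite_range X))
  set D : ℕ := D₀ + 1 with hD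
  have hDle : m₀ ^ D ≤ J := le_trans (Ideal.pow_le_pow_right (by omega)) hD₀
  -- quotient module setup
  set p' : Submodule ℂ (MvPolynomial σ ℂ) := Submodule.restrictScalars ℂ p with hp'
  set π : MvPolynomial σ ℂ →ₗ[ℂ] (MvPolynomial σ ℂ ⧸ p') := p'.mkQ with hπ
  set U : ℕ → Submodule ℂ (MvPolynomial σ ℂ ⧸ p') :=
    fun d => Submodule.map π (homogeneousSubmodule σ ℂ d) with hU
  haveI : ∀ d, FiniteDimensional ℂ (homogeneousSubmodule σ ℂ d) :=
    fun d => homogeneousSubmodule_fd d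
  haveI hUfd : ∀ d, FiniteDimensional ℂ (U d) := fun d => inferInstanceAs
    (FiniteDimensional ℂ (Submodule.map π (homogeneousSubmodule σ ℂ d)))
  set h : ℕ → ℕ := fun d => finrank ℂ (U d) with hh
  -- multiplication maps on the quotient
  have hcomap : ∀ g : MvPolynomial σ ℂ, p' ≤ p'.comap (LinearMap.mulLeft ℂ g) := by
    intro g x hx
    exact Ideal.mul_mem_left _ g hx
  set Φ : MvPolynomial σ ℂ → ((MvPolynomial σ ℂ ⧸ p') →ₗ[ℂ] (MvPolynomial σ ℂ ⧸ p')) :=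
    fun g => Submodule.mapQ p' p' (LinearMap.mulLeft ℂ g) (hcomap g) with hΦ
  have hΦapp : ∀ g x, Φ g (π x) = π (g * x) := by
    intro g x
    rw [hΦ, hπ]
    simp [Submodule.mapQ_apply]
  -- step 1 : for d ≥ D, h d ≤ h (d - 1)
  have step1 : ∀ d, D ≤ d → h d ≤ h (d - 1) := by
    intro d hd
    have hsub : U d ≤ Submodule.map (Φ ℓ) (U (d - 1)) := by
      rintro ξ ⟨f, hf, rfl⟩
      have hfhom : f.IsHomogeneous d := (mem_homogeneousSubmodule _ _).mp hf
      have hfJ : f ∈ J := hDle ((Ideal.pow_le_pow_right hd) (homog_mem_pow hfhom))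
      obtain ⟨a, ha, r, hr, hfeq⟩ := Submodule.mem_sup.mp hfJ
      obtain ⟨b, hb⟩ := Ideal.mem_span_singleton'.mp hr
      have hd1 : 1 ≤ d := le_trans (by omega) hd
      have hfd : homogeneousComponent d f = f := by
        rw [homogeneousComponent_of_mem hf, if_pos rfl]
      have key : f = homogeneousComponent d a + homogeneousComponent (d - 1) b * ℓ := by
        conv_lhs => rw [← hfd]
        rw [← hfeq, map_add, ← hb, homogeneousComponent_mul_linear hl hd1]
      refine ⟨π (homogeneousComponent (d - 1) b),
        ⟨homogeneousComponent (d - 1) b, homogeneousComponent_mem (d - 1) b, rfl⟩, ?_⟩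
      rw [hΦapp, hπ, Submodule.mkQ_apply, Submodule.mkQ_apply, Submodule.Quotient.eq]
      have h6 : ℓ * homogeneousComponent (d - 1) b - f = -(homogeneousComponent d a) := by
        rw [key]; ring
      rw [h6]
      exact Submodule.neg_mem _ (hpcomp a ha d)
    calc h d ≤ finrank ℂ (Submodule.map (Φ ℓ) (U (d - 1))) := Submodule.finrank_mono hsub
      _ ≤ h (d - 1) := Submodule.finrank_map_le _ _
  -- injectivity of multiplication by f₀ on the quotient
  have hΦinj : Function.Injective (Φ f₀) := by
    rw [← LinearMap.ker_eq_bot, Submodule.eq_bot_iff]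
    intro x hx
    obtain ⟨u, rfl⟩ := Submodule.mkQ_surjective p' x
    rw [LinearMap.mem_ker] at hx
    have h2 : π (f₀ * u) = 0 := by rw [← hΦapp]; exact hx
    have h3 : f₀ * u ∈ p := by
      rwa [hπ, Submodule.mkQ_apply, Submodule.Quotient.mk_eq_zero] at h2
    have hu : u ∈ p := (hpprime.mem_or_mem h3).resolve_left hf₀p
    rw [Submodule.mkQ_apply, Submodule.Quotient.mk_eq_zero]
    exact hu
  -- step 2 : for all d, h d < h (d + e)
  have step2 : ∀ d, h d < h (d + e) := by
    intro d
    set W : Submodule ℂ (MvPolynomial σ ℂ ⧸ p') := Submodule.map (Φ f₀) (U d) with hW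
    set V : Submodule ℂ (MvPolynomial σ ℂ ⧸ p') :=
      (Submodule.map π (Submodule.restrictScalars ℂ q)) ⊓ U (d + e) with hV
    have hWV : W ≤ V := by
      rintro w ⟨ξ, ⟨f, hf, rfl⟩, rfl⟩
      rw [hΦapp]
      refine Submodule.mem_inf.mpr ⟨⟨f₀ * f, q.mul_mem_right f hf₀q, rfl⟩,
        ⟨f₀ * f, ?_, rfl⟩⟩
      have h5 := hf₀hom.mul ((mem_homogeneousSubmodule _ _).mp hf)
      rw [add_comm] at h5
      exact (mem_homogeneousSubmodule _ _).mpr h5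
    have hx₀U : π (X i₀ ^ (d + e)) ∈ U (d + e) :=
      ⟨X i₀ ^ (d + e), (mem_homogeneousSubmodule _ _).mpr (isHomogeneous_X_pow i₀ (d + e)), rfl⟩
    have hx₀V : π (X i₀ ^ (d + e)) ∉ V := by
      rintro ⟨⟨w, hwq, hwx⟩, -⟩
      have h6 : w - X i₀ ^ (d + e) ∈ p := by
        have := hwx
        rw [hπ, Submodule.mkQ_apply, Submodule.mkQ_apply] at this
        exact (Submodule.Quotient.eq p').mp this
      have h7 : X i₀ ^ (d + e) ∈ q := by
        have h8 : X i₀ ^ (d + e) = w - (w - X i₀ ^ (d + e)) := by ring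
        rw [h8]
        exact Submodule.sub_mem _ hwq (le_of_lt hpq h6)
      exact hXq (hqprime.mem_of_pow_mem _ h7)
    have hVlt : V < U (d + e) :=
      SetLike.lt_iff_le_and_exists.mpr ⟨inf_le_right, π (X i₀ ^ (d + e)), hx₀U, hx₀V⟩
    haveI : FiniteDimensional ℂ (U (d + e)) := hUfd (d + e)
    haveI : FiniteDimensional ℂ V := Submodule.finiteDimensional_of_le inf_le_right
    have heq : h d = finrank ℂ W :=
      (Submodule.equivMapOfInjective (Φ f₀) hΦinj (U d)).finrank_eq
    calc h d = finrank ℂ W := heq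
      _ ≤ finrank ℂ V := Submodule.finrank_mono hWV
      _ < h (d + e) := Submodule.finrank_lt_finrank_of_lt hVlt
  -- conclusion
  have hdesc : ∀ k, h (D + k) ≤ h D := by
    intro k
    induction k with
    | zero => simp
    | succ n ih =>
      have h9 := step1 (D + n + 1) (by omega)
      have harith : D + n + 1 - 1 = D + n := by omega
      rw [harith] at h9
      exact le_trans (by simpa [Nat.add_assoc] using h9) ih
  exact absurd (hdesc e) (not_le.mpr (step2 D))

end Aux5
noncomputable section Aux6

set_option linter.unusedSectionVars false

open MvPolynomial Set

variable {σ : Type*} [Fintype σ]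

lemma no_three_chain {A : Set (σ → ℂ)} (hAdim : adim A = 2)
    (x0 x1 x2 x3 : {T : Set (σ → ℂ) // IsAlg T ∧ IsIrredV T ∧ T ⊆ A})
    (h01 : x0 < x1) (h12 : x1 < x2) (h23 : x2 < x3) : False := by
  let s : LTSeries {T : Set (σ → ℂ) // IsAlg T ∧ IsIrredV T ∧ T ⊆ A} :=
    (((RelSeries.singleton _ x0).snoc x1
      (by simpa [RelSeries.last_singleton] using h01)).snoc
      x2 (by simpa using h12)).snoc x3 (by simpa using h23)
  have hlen : s.length = 3 := rfl
  have hle := Order.LTSeries.length_le_krullDim s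
  rw [hlen] at hle
  rw [adim] at hAdim
  rw [hAdim] at hle
  norm_num at hle
  exact absurd hle (by norm_cast)

lemma exists_two_chain {A : Set (σ → ℂ)} (hAdim : adim A = 2) :
    ∃ x0 x1 x2 : {T : Set (σ → ℂ) // IsAlg T ∧ IsIrredV T ∧ T ⊆ A},
      x0 < x1 ∧ x1 < x2 := by
  haveI hne : Nonempty {T : Set (σ → ℂ) // IsAlg T ∧ IsIrredV T ∧ T ⊆ A} := by
    by_contra h
    rw [not_nonempty_iff] at h
    rw [adim, @Order.krullDim_eq_bot _ _ h] at hAdim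
    exact absurd hAdim (WithBot.bot_ne_ofNat 2)
  rw [adim, Order.krullDim_eq_iSup_length] at hAdim
  have h2 : (⨆ p : LTSeries {T : Set (σ → ℂ) // IsAlg T ∧ IsIrredV T ∧ T ⊆ A},
      (p.length : ℕ∞)) = 2 := by
    have hAdim' : ((⨆ p : LTSeries {T : Set (σ → ℂ) // IsAlg T ∧ IsIrredV T ∧ T ⊆ A},
        (p.length : ℕ∞) : ℕ∞) : WithBot ℕ∞) = ((2 : ℕ∞) : WithBot ℕ∞) := hAdim
    exact WithBot.coe_inj.mp hAdim'
  have hex : ∃ p : LTSeries {T : Set (σ → ℂ) // IsAlg T ∧ IsIrredV T ∧ T ⊆ A},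
      2 ≤ p.length := by
    by_contra h
    push_neg at h
    have hle : (⨆ p : LTSeries {T : Set (σ → ℂ) // IsAlg T ∧ IsIrredV T ∧ T ⊆ A},
        (p.length : ℕ∞)) ≤ 1 := by
      refine iSup_le fun p => ?_
      have := h p
      exact_mod_cast Nat.le_of_lt_succ this
    rw [h2] at hle
    norm_num at hle
  obtain ⟨p, hp⟩ := hex
  refine ⟨p ⟨0, by omega⟩, p ⟨1, by omega⟩, p ⟨2, by omega⟩,
    p.strictMono ?_, p.strictMono ?_⟩ <;> simp [Fin.lt_def]

lemma exists_line_ssubset {A : Set (σ → ℂ)} (hAcone : ∀ c : ℂ, ∀ w ∈ A, c • w ∈ A)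
    (hAdim : adim A = 2) :
    ∃ v, v ≠ 0 ∧ v ∈ A ∧ Set.range (fun c : ℂ => c • v) ⊂ A := by
  obtain ⟨x0, x1, x2, h01, h12⟩ := exists_two_chain hAdim
  obtain ⟨a, ha⟩ := x0.2.2.1.1
  have h01' : x0.1 ⊂ x1.1 := Set.lt_iff_ssubset.mp (Subtype.coe_lt_coe.mpr h01)
  have h12' : x1.1 ⊂ x2.1 := Set.lt_iff_ssubset.mp (Subtype.coe_lt_coe.mpr h12)
  have hax1 : a ∈ x1.1 := h01'.subset ha
  obtain ⟨b, hb, hba⟩ := Set.exists_of_ssubset h01'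
  set v : σ → ℂ := if a = 0 then b else a with hv
  have hvx1 : v ∈ x1.1 := by
    rw [hv]; split_ifs with h'
    · exact hb
    · exact hax1
  have hv0 : v ≠ 0 := by
    rw [hv]; split_ifs with h'
    · intro hb0; exact hba (by rw [hb0, ← h']; exact ha)
    · exact h'
  have hvA : v ∈ A := x1.2.2.2 hvx1
  have hlsub : Set.range (fun c : ℂ => c • v) ⊆ A := by
    rintro w ⟨c, rfl⟩
    exact hAcone c v hvA
  refine ⟨v, hv0, hvA, hlsub.ssubset_of_ne ?_⟩
  intro hLA
  have hx1sub : x1.1 ⊆ Set.range (fun c : ℂ => c • v) := by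
    rw [hLA]; exact x1.2.2.2
  rcases irred_subset_line hv0 x1.2.1 x1.2.2.1 hx1sub with ⟨pt, hpt⟩ | hline
  · have h1 : a = pt := by have := hax1; rwa [hpt, Set.mem_singleton_iff] at this
    have h2 : b = pt := by have := hb; rwa [hpt, Set.mem_singleton_iff] at this
    exact hba (by rw [h2, ← h1]; exact ha)
  · have : x2.1 ⊆ x1.1 := by
      rw [hline, hLA]; exact x2.2.2.2
    exact h12'.not_subset this

end Aux6
noncomputable section Aux7

set_option linter.unusedSectionVars false

open MvPolynomial Set

variable {σ : Type*} [Fintype σ]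

lemma eval_bind_scale (x : σ → ℂ) (g : σ → MvPolynomial σ ℂ) (f : MvPolynomial σ ℂ) :
    eval x (bind₁ g f) = eval (fun i => eval x (g i)) f := by
  show eval₂Hom (RingHom.id ℂ) x (bind₁ g f) = _
  rw [eval₂Hom_bind₁]
  rfl

lemma cone_meets_hyperplane {A : Set (σ → ℂ)} (hA : IsAlg A) (hAirr : IsIrredV A)
    (hAcone : ∀ c : ℂ, ∀ w ∈ A, c • w ∈ A) (hAdim : adim A = 2) (y : σ → ℂ) :
    ∃ φ ∈ A, φ ≠ 0 ∧ ∑ i, φ i * y i = 0 := by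
  have hl : (∑ i : σ, C (y i) * X i : MvPolynomial σ ℂ).IsHomogeneous 1 :=
    IsHomogeneous.sum _ _ _ fun i _ => isHomogeneous_C_mul_X _ _
  obtain ⟨φ, hφA, hφ0, hev⟩ := cone_hyperplane_zero A hA hAirr hAcone _ hl
    (exists_line_ssubset hAcone hAdim)
  refine ⟨φ, hφA, hφ0, ?_⟩
  rw [map_sum] at hev
  simp only [map_mul, eval_C, eval_X] at hev
  rw [← hev]
  exact Finset.sum_congr rfl fun i _ => mul_comm _ _

end Aux7

/-- let `Y ⊂ ℙ^N` be a closed irreducible variety, `A` a curve of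
hyperplanes in the dual projective space (an irreducible algebraic cone of
affine dimension 2 in the dual `ℂ^{N+1}`), and `A° = A \ B` a nonempty open
subset of `A`.  If `Y ⊄ H` for every hyperplane `H ∈ A`, then `Y` is the
Zariski closure of the union of the sections `Y ∩ H`, `H ∈ A°`. -/
theorem stmt13 {N : ℕ} (Y A B : Set (Fin (N + 1) → ℂ))
    (hY : IsAlg Y) (hYirr : IsIrredV Y) (hYcone : ∀ c : ℂ, ∀ v ∈ Y, c • v ∈ Y)
    (hA : IsAlg A) (hAirr : IsIrredV A) (hAcone : ∀ c : ℂ, ∀ φ ∈ A, c • φ ∈ A)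
    (hAdim : adim A = 2)
    (hB : IsAlg B) (hAB : ¬ A ⊆ B)
    (hnot : ∀ φ ∈ A, φ ≠ 0 → ¬ Y ⊆ {v | ∑ i, φ i * v i = 0}) :
    Y = zcl {v | v ∈ Y ∧ ∃ φ ∈ A, φ ∉ B ∧ φ ≠ 0 ∧ ∑ i, φ i * v i = 0} := by
  classical
  set S : Set (Fin (N + 1) → ℂ) :=
    {v | v ∈ Y ∧ ∃ φ ∈ A, φ ∉ B ∧ φ ≠ 0 ∧ ∑ i, φ i * v i = 0} with hSdef
  refine Set.Subset.antisymm ?_ (zcl_min hY fun v hv => hv.1)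
  -- the cone of hyperplanes entirely inside B
  set B' : Set (Fin (N + 1) → ℂ) := {φ | ∀ c : ℂ, c • φ ∈ B} with hB'def
  have hB'alg : IsAlg B' := by
    have hrw : B' = ⋂ c : ℂ, (fun φ : Fin (N + 1) → ℂ => c • φ) ⁻¹' B := by
      ext φ
      simp [hB'def]
    rw [hrw]
    refine isAlg_iInter fun c => ?_
    obtain ⟨I, hI⟩ := hB
    refine ⟨(fun f => bind₁ (fun i => C c * X i) f) '' I, ?_⟩
    rw [hI]
    ext φ
    simp only [Set.mem_preimage, mem_zLocus', Set.mem_image]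
    have hfun : (fun i => eval φ (C c * X i)) = c • φ := by
      funext i
      show eval φ (C c * X i) = c * φ i
      simp
    constructor
    · rintro h f' ⟨g, hg, rfl⟩
      rw [eval_bind_scale, hfun]
      exact h g hg
    · intro h g hg
      have h1 := h _ ⟨g, hg, rfl⟩
      rwa [eval_bind_scale, hfun] at h1
  have hB'cone : ∀ (c : ℂ) (φ : Fin (N + 1) → ℂ), φ ∈ B' → c • φ ∈ B' := by
    intro c φ hφ c'
    rw [smul_smul]
    exact hφ (c' * c)
  have hAB' : ¬ A ⊆ B' := by
    intro hsub
    refine hAB fun φ hφ => ?_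
    have h1 := hsub hφ 1
    rwa [one_smul] at h1
  have hDss : A ∩ B' ⊂ A :=
    ⟨Set.inter_subset_left, fun hc => hAB' fun φ hφ => (hc hφ).2⟩
  obtain ⟨𝒯, h𝒯fin, h𝒯ia, h𝒯un⟩ := exists_irred_decomposition (A ∩ B') (hA.inter hB'alg)
  -- the common zero set of a family of hyperplanes
  set E : Set (Fin (N + 1) → ℂ) → Set (Fin (N + 1) → ℂ) :=
    fun T => {x | ∀ ψ ∈ T, ∑ i, ψ i * x i = 0} with hEdef
  have hEalg : ∀ T, IsAlg (E T) := by
    intro T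
    refine ⟨(fun ψ : Fin (N + 1) → ℂ => ∑ i, C (ψ i) * X i) '' T, ?_⟩
    ext x
    simp only [hEdef, Set.mem_setOf_eq, mem_zLocus', Set.mem_image]
    have hev : ∀ ψ : Fin (N + 1) → ℂ, eval x (∑ i, C (ψ i) * X i) = ∑ i, ψ i * x i := by
      intro ψ
      rw [map_sum]
      exact Finset.sum_congr rfl fun i _ => by simp
    constructor
    · rintro h f' ⟨ψ, hψ, rfl⟩
      rw [hev]
      exact h ψ hψ
    · intro h ψ hψ
      have h1 := h _ ⟨ψ, hψ, rfl⟩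
      rwa [hev] at h1
  set 𝒢 : Set (Set (Fin (N + 1) → ℂ)) := {T | T ∈ 𝒯 ∧ ∃ ψ ∈ T, ψ ≠ 0} with h𝒢def
  have h𝒢fin : 𝒢.Finite := h𝒯fin.subset fun T hT => hT.1
  have hEfin : (E '' 𝒢).Finite := h𝒢fin.image E
  have hEalg' : ∀ W ∈ E '' 𝒢, IsAlg W := by
    rintro W ⟨T, _, rfl⟩
    exact hEalg T
  -- the covering of Y
  have hcover : Y ⊆ zcl S ∪ ⋃₀ (E '' 𝒢) := by
    intro y hy
    obtain ⟨ψ, hψA, hψ0, hψy⟩ := cone_meets_hyperplane hA hAirr hAcone hAdim y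
    by_cases hψB' : ψ ∈ B'
    · -- the line through ψ lies in A ∩ B', hence in a component, which must be the line
      right
      have hlineD : Set.range (fun c : ℂ => c • ψ) ⊆ A ∩ B' := by
        rintro w ⟨c, rfl⟩
        exact ⟨hAcone c ψ hψA, hB'cone c ψ hψB'⟩
      rw [h𝒯un] at hlineD
      obtain ⟨T, hT𝒯, hLT⟩ := irred_subset_of_subset_sUnion (isIrredV_line hψ0) h𝒯fin
        (fun T hT => (h𝒯ia T hT).1) hlineD
      have hTsubD : T ⊆ A ∩ B' := by
        rw [h𝒯un]
        exact Set.subset_sUnion_of_mem hT𝒯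
      have hTA : T ⊆ A := hTsubD.trans Set.inter_subset_left
      have hTeq : T = Set.range (fun c : ℂ => c • ψ) := by
        by_contra hne
        have hLssT : Set.range (fun c : ℂ => c • ψ) ⊂ T :=
          hLT.ssubset_of_ne fun h => hne h.symm
        have hTssA : T ⊂ A := by
          refine hTA.ssubset_of_ne ?_
          intro hTA'
          exact hDss.not_subset (hTA' ▸ hTsubD)
        have hsingL : ({ψ} : Set (Fin (N + 1) → ℂ)) ⊂ Set.range (fun c : ℂ => c • ψ) := by
          constructor
          · rintro x rfl
            exact ⟨1, one_smul _ _⟩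
          · intro hc
            have h0 : (0 : Fin (N + 1) → ℂ) ∈ Set.range (fun c : ℂ => c • ψ) :=
              ⟨0, zero_smul _ _⟩
            have := hc h0
            rw [Set.mem_singleton_iff] at this
            exact hψ0 this.symm
        exact no_three_chain hAdim
          ⟨{ψ}, isAlg_singleton ψ, isIrredV_singleton ψ,
            Set.singleton_subset_iff.mpr hψA⟩
          ⟨Set.range (fun c : ℂ => c • ψ), isAlg_line ψ, isIrredV_line hψ0,
            fun w hw => hLT.trans hTA hw⟩
          ⟨T, (h𝒯ia T hT𝒯).1, (h𝒯ia T hT𝒯).2, hTA⟩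
          ⟨A, hA, hAirr, subset_rfl⟩
          (Subtype.mk_lt_mk.mpr (Set.lt_iff_ssubset.mpr hsingL))
          (Subtype.mk_lt_mk.mpr (Set.lt_iff_ssubset.mpr hLssT))
          (Subtype.mk_lt_mk.mpr (Set.lt_iff_ssubset.mpr hTssA))
      have hT𝒢 : T ∈ 𝒢 := by
        refine ⟨hT𝒯, ψ, ?_, hψ0⟩
        rw [hTeq]
        exact ⟨1, one_smul _ _⟩
      refine Set.mem_sUnion.mpr ⟨E T, ⟨T, hT𝒢, rfl⟩, ?_⟩
      intro ψ' hψ'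
      rw [hTeq] at hψ'
      obtain ⟨c, rfl⟩ := hψ'
      have hsum : ∑ i, (c • ψ) i * y i = c * ∑ i, ψ i * y i := by
        rw [Finset.mul_sum]
        exact Finset.sum_congr rfl fun i _ => by
          show c * ψ i * y i = c * (ψ i * y i)
          ring
      rw [hsum, hψy, mul_zero]
    · -- rescale ψ to escape B
      left
      refine subset_zcl S ?_
      have hray : ¬ Set.range (fun c : ℂ => c • ψ) ⊆ B := by
        intro hsub
        exact hψB' fun c => hsub ⟨c, rfl⟩
      have hfin : {c : ℂ | c • ψ ∈ B}.Finite := by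
        rcases line_subset_or_finite (v := ψ) hB with h | h
        · exact absurd h hray
        · exact h
      obtain ⟨c, hc⟩ := (hfin.union (Set.finite_singleton 0)).infinite_compl.nonempty
      rw [Set.mem_compl_iff, Set.mem_union] at hc
      push_neg at hc
      obtain ⟨hcB, hc0⟩ := hc
      have hc0' : c ≠ 0 := hc0
      refine ⟨hy, c • ψ, hAcone c ψ hψA, hcB, ?_, ?_⟩
      · intro h
        rcases smul_eq_zero.mp h with h | h
        · exact hc0' h
        · exact hψ0 h
      · have hsum : ∑ i, (c • ψ) i * y i = c * ∑ i, ψ i * y i := by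
          rw [Finset.mul_sum]
          exact Finset.sum_congr rfl fun i _ => by
            show c * ψ i * y i = c * (ψ i * y i)
            ring
        rw [hsum, hψy, mul_zero]
  -- conclude by irreducibility of Y
  rcases hYirr.2 _ _ (isAlg_zcl S) (isAlg_sUnion_finite hEfin hEalg') hcover with h | h
  · exact h
  · exfalso
    obtain ⟨W, hW, hYW⟩ := irred_subset_of_subset_sUnion hYirr hEfin hEalg' h
    obtain ⟨T, hT𝒢, rfl⟩ := hW
    obtain ⟨hT𝒯, ψ, hψT, hψ0⟩ := hT𝒢
    have hψA : ψ ∈ A := by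
      have : ψ ∈ A ∩ B' := by
        rw [h𝒯un]
        exact Set.subset_sUnion_of_mem hT𝒯 hψT
      exact this.1
    refine hnot ψ hψA hψ0 ?_
    intro v hv
    exact hYW hv ψ hψT
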